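/- In the two-period Kyle game with binary true value v ∈ {0,1} fully revealed to the insider at time 0 (each with probability 1/2), insider actions E_X = {0,1}, noise demands E_Z = {−1,0,1} with ζ({−1}) = ζ({1}) = ε and ζ({0}) = 1 − 2ε, no Kyle equilibrium exists in which the insider plays a pure strategy, provided ε is sufficiently small. In particular, for the candidate pure strategy where the insider buys in both periods when v = 1 and never trades when v = 0, with associated rational prices S, the deviation of not trading in period 1 (and buying in period 2 when v = 1) yields expected profit 1/2 + O(ε), strictly exceeding the O(ε) profit of the candidate strategy. -/
import Mathlib


open Finset

/-- Noise distribution on `{-1, 0, 1}`: `ζ({-1}) = ζ({1}) = ε`, `ζ({0}) = 1 − 2ε`. -/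
noncomputable def zetaNoise (ε z : ℝ) : ℝ := if z = 0 then 1 - 2 * ε else ε

/-- A (behaviour) strategy of the insider in the two-period game: `a1 v x1` is
the probability of playing `x1` in period 1 given the true value `v`, and
`a2 v x1 z1 x2` the probability of playing `x2` in period 2 given the history. -/
def ValidStrategy (a1 : ℝ → ℝ → ℝ) (a2 : ℝ → ℝ → ℝ → ℝ → ℝ) : Prop :=
  (∀ v ∈ ({0, 1} : Finset ℝ),
    (∀ x1 ∈ ({0, 1} : Finset ℝ), 0 ≤ a1 v x1) ∧
    ∑ x1 ∈ ({0, 1} : Finset ℝ), a1 v x1 = 1) ∧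
  (∀ v ∈ ({0, 1} : Finset ℝ), ∀ x1 ∈ ({0, 1} : Finset ℝ),
    ∀ z1 ∈ ({-1, 0, 1} : Finset ℝ),
    (∀ x2 ∈ ({0, 1} : Finset ℝ), 0 ≤ a2 v x1 z1 x2) ∧
    ∑ x2 ∈ ({0, 1} : Finset ℝ), a2 v x1 z1 x2 = 1)

/-- The insider plays a pure strategy. -/
def PureStrategy (a1 : ℝ → ℝ → ℝ) (a2 : ℝ → ℝ → ℝ → ℝ → ℝ) : Prop :=
  ∀ v ∈ ({0, 1} : Finset ℝ), ∀ x1 ∈ ({0, 1} : Finset ℝ),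
    (a1 v x1 = 0 ∨ a1 v x1 = 1) ∧
    ∀ z1 ∈ ({-1, 0, 1} : Finset ℝ), ∀ x2 ∈ ({0, 1} : Finset ℝ),
      a2 v x1 z1 x2 = 0 ∨ a2 v x1 z1 x2 = 1

/-- Expected payoff of the insider in the two-period game. -/
noncomputable def payoff (ε : ℝ) (a1 : ℝ → ℝ → ℝ) (a2 : ℝ → ℝ → ℝ → ℝ → ℝ)
    (S1 : ℝ → ℝ) (S2 : ℝ → ℝ → ℝ) : ℝ :=
  ∑ v ∈ ({0, 1} : Finset ℝ), ∑ x1 ∈ ({0, 1} : Finset ℝ),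
    ∑ z1 ∈ ({-1, 0, 1} : Finset ℝ), ∑ x2 ∈ ({0, 1} : Finset ℝ),
      ∑ z2 ∈ ({-1, 0, 1} : Finset ℝ),
        (1 / 2) * a1 v x1 * zetaNoise ε z1 * a2 v x1 z1 x2 * zetaNoise ε z2 *
          ((v - S1 (x1 + z1)) * x1 + (v - S2 (x1 + z1) (x2 + z2)) * x2)

/-- Probability of observing total demand `y1` in period 1. -/
noncomputable def p1 (ε : ℝ) (a1 : ℝ → ℝ → ℝ) (y1 : ℝ) : ℝ :=
  ∑ v ∈ ({0, 1} : Finset ℝ), ∑ x1 ∈ ({0, 1} : Finset ℝ),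
    ∑ z1 ∈ ({-1, 0, 1} : Finset ℝ),
      if x1 + z1 = y1 then (1 / 2) * a1 v x1 * zetaNoise ε z1 else 0

/-- Expectation of the true value on the event `{y₁ = y1}`. -/
noncomputable def pv1 (ε : ℝ) (a1 : ℝ → ℝ → ℝ) (y1 : ℝ) : ℝ :=
  ∑ v ∈ ({0, 1} : Finset ℝ), ∑ x1 ∈ ({0, 1} : Finset ℝ),
    ∑ z1 ∈ ({-1, 0, 1} : Finset ℝ),
      if x1 + z1 = y1 then (1 / 2) * a1 v x1 * zetaNoise ε z1 * v else 0

/-- Probability of observing total demands `(y1, y2)`. -/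
noncomputable def p2 (ε : ℝ) (a1 : ℝ → ℝ → ℝ) (a2 : ℝ → ℝ → ℝ → ℝ → ℝ)
    (y1 y2 : ℝ) : ℝ :=
  ∑ v ∈ ({0, 1} : Finset ℝ), ∑ x1 ∈ ({0, 1} : Finset ℝ),
    ∑ z1 ∈ ({-1, 0, 1} : Finset ℝ), ∑ x2 ∈ ({0, 1} : Finset ℝ),
      ∑ z2 ∈ ({-1, 0, 1} : Finset ℝ),
        if x1 + z1 = y1 ∧ x2 + z2 = y2 then
          (1 / 2) * a1 v x1 * zetaNoise ε z1 * a2 v x1 z1 x2 * zetaNoise ε z2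
        else 0

/-- Expectation of the true value on the event `{(y₁,y₂) = (y1,y2)}`. -/
noncomputable def pv2 (ε : ℝ) (a1 : ℝ → ℝ → ℝ) (a2 : ℝ → ℝ → ℝ → ℝ → ℝ)
    (y1 y2 : ℝ) : ℝ :=
  ∑ v ∈ ({0, 1} : Finset ℝ), ∑ x1 ∈ ({0, 1} : Finset ℝ),
    ∑ z1 ∈ ({-1, 0, 1} : Finset ℝ), ∑ x2 ∈ ({0, 1} : Finset ℝ),
      ∑ z2 ∈ ({-1, 0, 1} : Finset ℝ),
        if x1 + z1 = y1 ∧ x2 + z2 = y2 then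
          (1 / 2) * a1 v x1 * zetaNoise ε z1 * a2 v x1 z1 x2 * zetaNoise ε z2 * v
        else 0

/-- Kyle equilibrium of the two-period game: insider optimality and rational
pricing in both periods. -/
def IsTwoPeriodKyleEquilibrium (ε : ℝ) (a1 : ℝ → ℝ → ℝ)
    (a2 : ℝ → ℝ → ℝ → ℝ → ℝ) (S1 : ℝ → ℝ) (S2 : ℝ → ℝ → ℝ) : Prop :=
  ValidStrategy a1 a2 ∧
  (∀ y1, 0 ≤ S1 y1 ∧ S1 y1 ≤ 1) ∧
  (∀ y1 y2, 0 ≤ S2 y1 y2 ∧ S2 y1 y2 ≤ 1) ∧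
  (∀ b1 b2, ValidStrategy b1 b2 → payoff ε b1 b2 S1 S2 ≤ payoff ε a1 a2 S1 S2) ∧
  (∀ y1, 0 < p1 ε a1 y1 → S1 y1 * p1 ε a1 y1 = pv1 ε a1 y1) ∧
  (∀ y1 y2, 0 < p2 ε a1 a2 y1 y2 →
    S2 y1 y2 * p2 ε a1 a2 y1 y2 = pv2 ε a1 a2 y1 y2)

noncomputable def Rrem (ε : ℝ) (a1 : ℝ → ℝ → ℝ) (a2 : ℝ → ℝ → ℝ → ℝ → ℝ)
    (S1 : ℝ → ℝ) (S2 : ℝ → ℝ → ℝ) : ℝ :=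
  ∑ v ∈ ({0, 1} : Finset ℝ), ∑ x1 ∈ ({0, 1} : Finset ℝ),
    ∑ z1 ∈ ({-1, 0, 1} : Finset ℝ), ∑ x2 ∈ ({0, 1} : Finset ℝ),
      ∑ z2 ∈ ({-1, 0, 1} : Finset ℝ),
        (1 / 2) * a1 v x1 * zetaNoise ε z1 * a2 v x1 z1 x2 * zetaNoise ε z2 *
          ((S1 (x1 + z1) - v) * z1 + (S2 (x1 + z1) (x2 + z2) - v) * z2)

set_option maxHeartbeats 4000000 in
theorem pay_eq (ε : ℝ) (a1 : ℝ → ℝ → ℝ) (a2 : ℝ → ℝ → ℝ → ℝ → ℝ)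
    (S1 : ℝ → ℝ) (S2 : ℝ → ℝ → ℝ)
    (hs : ∀ v ∈ ({0,1} : Finset ℝ), ∀ x1 ∈ ({0,1} : Finset ℝ),
      ∀ z1 ∈ ({-1,0,1} : Finset ℝ), a2 v x1 z1 1 = 1 - a2 v x1 z1 0) :
    payoff ε a1 a2 S1 S2 =
      (∑ y1 ∈ ({-1, 0, 1, 2} : Finset ℝ),
        y1 * (pv1 ε a1 y1 - S1 y1 * p1 ε a1 y1)) +
      (∑ y1 ∈ ({-1, 0, 1, 2} : Finset ℝ), ∑ y2 ∈ ({-1, 0, 1, 2} : Finset ℝ),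
        y2 * (pv2 ε a1 a2 y1 y2 - S2 y1 y2 * p2 ε a1 a2 y1 y2)) +
      Rrem ε a1 a2 S1 S2 := by
  have h1 : a2 (0:ℝ) 0 (-1) 1 = 1 - a2 0 0 (-1) 0 := hs 0 (by norm_num) 0 (by norm_num) (-1) (by norm_num)
  have h2 : a2 (0:ℝ) 0 0 1 = 1 - a2 0 0 0 0 := hs 0 (by norm_num) 0 (by norm_num) 0 (by norm_num)
  have h3 : a2 (0:ℝ) 0 1 1 = 1 - a2 0 0 1 0 := hs 0 (by norm_num) 0 (by norm_num) 1 (by norm_num)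
  have h4 : a2 (0:ℝ) 1 (-1) 1 = 1 - a2 0 1 (-1) 0 := hs 0 (by norm_num) 1 (by norm_num) (-1) (by norm_num)
  have h5 : a2 (0:ℝ) 1 0 1 = 1 - a2 0 1 0 0 := hs 0 (by norm_num) 1 (by norm_num) 0 (by norm_num)
  have h6 : a2 (0:ℝ) 1 1 1 = 1 - a2 0 1 1 0 := hs 0 (by norm_num) 1 (by norm_num) 1 (by norm_num)
  have h7 : a2 (1:ℝ) 0 (-1) 1 = 1 - a2 1 0 (-1) 0 := hs 1 (by norm_num) 0 (by norm_num) (-1) (by norm_num)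
  have h8 : a2 (1:ℝ) 0 0 1 = 1 - a2 1 0 0 0 := hs 1 (by norm_num) 0 (by norm_num) 0 (by norm_num)
  have h9 : a2 (1:ℝ) 0 1 1 = 1 - a2 1 0 1 0 := hs 1 (by norm_num) 0 (by norm_num) 1 (by norm_num)
  have h10 : a2 (1:ℝ) 1 (-1) 1 = 1 - a2 1 1 (-1) 0 := hs 1 (by norm_num) 1 (by norm_num) (-1) (by norm_num)
  have h11 : a2 (1:ℝ) 1 0 1 = 1 - a2 1 1 0 0 := hs 1 (by norm_num) 1 (by norm_num) 0 (by norm_num)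
  have h12 : a2 (1:ℝ) 1 1 1 = 1 - a2 1 1 1 0 := hs 1 (by norm_num) 1 (by norm_num) 1 (by norm_num)
  norm_num [payoff, p1, pv1, p2, pv2, Rrem, Finset.sum_insert, Finset.mem_insert,
    Finset.mem_singleton, Finset.sum_singleton, zetaNoise, h1, h2, h3, h4, h5, h6, h7, h8, h9, h10, h11, h12]
  ring
lemma zeta_nonneg {ε : ℝ} (hε : 0 < ε) (hε' : ε ≤ 1/3) (z : ℝ) :
    0 ≤ zetaNoise ε z := by
  unfold zetaNoise; split <;> linarith

lemma zeta_le_one {ε : ℝ} (hε : 0 < ε) (hε' : ε ≤ 1/3) (z : ℝ) :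
    zetaNoise ε z ≤ 1 := by
  unfold zetaNoise; split <;> linarith

section
variable {ε : ℝ} {a1 : ℝ → ℝ → ℝ} {a2 : ℝ → ℝ → ℝ → ℝ → ℝ}

lemma a1_nonneg (h : ValidStrategy a1 a2) {v x1 : ℝ} (hv : v ∈ ({0,1} : Finset ℝ))
    (hx1 : x1 ∈ ({0,1} : Finset ℝ)) : 0 ≤ a1 v x1 := (h.1 v hv).1 x1 hx1

lemma a2_nonneg (h : ValidStrategy a1 a2) {v x1 z1 x2 : ℝ} (hv : v ∈ ({0,1} : Finset ℝ))
    (hx1 : x1 ∈ ({0,1} : Finset ℝ)) (hz1 : z1 ∈ ({-1,0,1} : Finset ℝ))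
    (hx2 : x2 ∈ ({0,1} : Finset ℝ)) : 0 ≤ a2 v x1 z1 x2 :=
  (h.2 v hv x1 hx1 z1 hz1).1 x2 hx2

lemma a1_le_one (h : ValidStrategy a1 a2) {v x1 : ℝ} (hv : v ∈ ({0,1} : Finset ℝ))
    (hx1 : x1 ∈ ({0,1} : Finset ℝ)) : a1 v x1 ≤ 1 := by
  have hsum := (h.1 v hv).2
  have h0 := (h.1 v hv).1 0 (by norm_num)
  have h1 := (h.1 v hv).1 1 (by norm_num)
  rw [show ({0,1} : Finset ℝ) = {0,1} from rfl, Finset.sum_insert (by norm_num),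
    Finset.sum_singleton] at hsum
  simp only [Finset.mem_insert, Finset.mem_singleton] at hx1
  rcases hx1 with h | h <;> subst h <;> linarith

lemma a2_le_one (h : ValidStrategy a1 a2) {v x1 z1 x2 : ℝ} (hv : v ∈ ({0,1} : Finset ℝ))
    (hx1 : x1 ∈ ({0,1} : Finset ℝ)) (hz1 : z1 ∈ ({-1,0,1} : Finset ℝ))
    (hx2 : x2 ∈ ({0,1} : Finset ℝ)) : a2 v x1 z1 x2 ≤ 1 := by
  have hsum := (h.2 v hv x1 hx1 z1 hz1).2
  have h0 := (h.2 v hv x1 hx1 z1 hz1).1 0 (by norm_num)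
  have h1 := (h.2 v hv x1 hx1 z1 hz1).1 1 (by norm_num)
  rw [show ({0,1} : Finset ℝ) = {0,1} from rfl, Finset.sum_insert (by norm_num),
    Finset.sum_singleton] at hsum
  simp only [Finset.mem_insert, Finset.mem_singleton] at hx2
  rcases hx2 with h | h <;> subst h <;> linarith

lemma p1_nonneg (hε : 0 < ε) (hε' : ε ≤ 1/3) (h : ValidStrategy a1 a2) (y1 : ℝ) :
    0 ≤ p1 ε a1 y1 := by
  unfold p1
  apply Finset.sum_nonneg; intro v hv
  apply Finset.sum_nonneg; intro x1 hx1
  apply Finset.sum_nonneg; intro z1 hz1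
  split
  · have := a1_nonneg h hv hx1
    have hz := zeta_nonneg hε hε' z1
    positivity
  · exact le_refl 0

lemma pv1_nonneg (hε : 0 < ε) (hε' : ε ≤ 1/3) (h : ValidStrategy a1 a2) (y1 : ℝ) :
    0 ≤ pv1 ε a1 y1 := by
  unfold pv1
  apply Finset.sum_nonneg; intro v hv
  apply Finset.sum_nonneg; intro x1 hx1
  apply Finset.sum_nonneg; intro z1 hz1
  split
  · have := a1_nonneg h hv hx1
    have hz := zeta_nonneg hε hε' z1
    have hv' : 0 ≤ v := by
      simp only [Finset.mem_insert, Finset.mem_singleton] at hv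
      rcases hv with h | h <;> simp [h]
    positivity
  · exact le_refl 0

lemma pv1_le_p1 (hε : 0 < ε) (hε' : ε ≤ 1/3) (h : ValidStrategy a1 a2) (y1 : ℝ) :
    pv1 ε a1 y1 ≤ p1 ε a1 y1 := by
  unfold p1 pv1
  apply Finset.sum_le_sum; intro v hv
  apply Finset.sum_le_sum; intro x1 hx1
  apply Finset.sum_le_sum; intro z1 hz1
  split
  · have := a1_nonneg h hv hx1
    have hz := zeta_nonneg hε hε' z1
    have hv' : v ≤ 1 := by
      simp only [Finset.mem_insert, Finset.mem_singleton] at hv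
      rcases hv with h | h <;> simp [h]
    exact mul_le_of_le_one_right (by positivity) hv'
  · exact le_refl 0

lemma priceEq1 (hε : 0 < ε) (hε' : ε ≤ 1/3) (h : ValidStrategy a1 a2) (S1 : ℝ → ℝ)
    (hpr : ∀ y1, 0 < p1 ε a1 y1 → S1 y1 * p1 ε a1 y1 = pv1 ε a1 y1) (y1 : ℝ) :
    S1 y1 * p1 ε a1 y1 = pv1 ε a1 y1 := by
  rcases (p1_nonneg hε hε' h y1).lt_or_eq with hlt | heq
  · exact hpr y1 hlt
  · have h1 : pv1 ε a1 y1 = 0 :=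
      le_antisymm (heq ▸ pv1_le_p1 hε hε' h y1) (pv1_nonneg hε hε' h y1)
    rw [h1, ← heq, mul_zero]
lemma p2_nonneg (hε : 0 < ε) (hε' : ε ≤ 1/3) (h : ValidStrategy a1 a2) (y1 y2 : ℝ) :
    0 ≤ p2 ε a1 a2 y1 y2 := by
  unfold p2
  apply Finset.sum_nonneg; intro v hv
  apply Finset.sum_nonneg; intro x1 hx1
  apply Finset.sum_nonneg; intro z1 hz1
  apply Finset.sum_nonneg; intro x2 hx2
  apply Finset.sum_nonneg; intro z2 hz2
  split
  · have h1 := a1_nonneg h hv hx1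
    have h2 := a2_nonneg h hv hx1 hz1 hx2
    have hza := zeta_nonneg hε hε' z1
    have hzb := zeta_nonneg hε hε' z2
    positivity
  · exact le_refl 0

lemma pv2_nonneg (hε : 0 < ε) (hε' : ε ≤ 1/3) (h : ValidStrategy a1 a2) (y1 y2 : ℝ) :
    0 ≤ pv2 ε a1 a2 y1 y2 := by
  unfold pv2
  apply Finset.sum_nonneg; intro v hv
  apply Finset.sum_nonneg; intro x1 hx1
  apply Finset.sum_nonneg; intro z1 hz1
  apply Finset.sum_nonneg; intro x2 hx2
  apply Finset.sum_nonneg; intro z2 hz2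
  split
  · have h1 := a1_nonneg h hv hx1
    have h2 := a2_nonneg h hv hx1 hz1 hx2
    have hza := zeta_nonneg hε hε' z1
    have hzb := zeta_nonneg hε hε' z2
    have hv' : 0 ≤ v := by
      simp only [Finset.mem_insert, Finset.mem_singleton] at hv
      rcases hv with h | h <;> simp [h]
    positivity
  · exact le_refl 0

lemma pv2_le_p2 (hε : 0 < ε) (hε' : ε ≤ 1/3) (h : ValidStrategy a1 a2) (y1 y2 : ℝ) :
    pv2 ε a1 a2 y1 y2 ≤ p2 ε a1 a2 y1 y2 := by
  unfold p2 pv2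
  apply Finset.sum_le_sum; intro v hv
  apply Finset.sum_le_sum; intro x1 hx1
  apply Finset.sum_le_sum; intro z1 hz1
  apply Finset.sum_le_sum; intro x2 hx2
  apply Finset.sum_le_sum; intro z2 hz2
  split
  · have h1 := a1_nonneg h hv hx1
    have h2 := a2_nonneg h hv hx1 hz1 hx2
    have hza := zeta_nonneg hε hε' z1
    have hzb := zeta_nonneg hε hε' z2
    have hv' : v ≤ 1 := by
      simp only [Finset.mem_insert, Finset.mem_singleton] at hv
      rcases hv with h | h <;> simp [h]
    exact mul_le_of_le_one_right (by positivity) hv'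
  · exact le_refl 0

lemma priceEq2 (hε : 0 < ε) (hε' : ε ≤ 1/3) (h : ValidStrategy a1 a2) (S2 : ℝ → ℝ → ℝ)
    (hpr : ∀ y1 y2, 0 < p2 ε a1 a2 y1 y2 →
      S2 y1 y2 * p2 ε a1 a2 y1 y2 = pv2 ε a1 a2 y1 y2) (y1 y2 : ℝ) :
    S2 y1 y2 * p2 ε a1 a2 y1 y2 = pv2 ε a1 a2 y1 y2 := by
  rcases (p2_nonneg hε hε' h y1 y2).lt_or_eq with hlt | heq
  · exact hpr y1 y2 hlt
  · have h1 : pv2 ε a1 a2 y1 y2 = 0 :=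
      le_antisymm (heq ▸ pv2_le_p2 hε hε' h y1 y2) (pv2_nonneg hε hε' h y1 y2)
    rw [h1, ← heq, mul_zero]

end
lemma leaf_bound {ε a c u1 u2 v z1 z2 : ℝ} (hε : 0 < ε) (hε' : ε ≤ 1/3)
    (ha : 0 ≤ a) (ha1 : a ≤ 1) (hc : 0 ≤ c) (hc1 : c ≤ 1)
    (hu1 : 0 ≤ u1) (hu1' : u1 ≤ 1) (hu2 : 0 ≤ u2) (hu2' : u2 ≤ 1)
    (hv : v = 0 ∨ v = 1) (hz1 : z1 = -1 ∨ z1 = 0 ∨ z1 = 1)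
    (hz2 : z2 = -1 ∨ z2 = 0 ∨ z2 = 1) :
    (1 / 2) * a * zetaNoise ε z1 * c * zetaNoise ε z2 *
      ((u1 - v) * z1 + (u2 - v) * z2) ≤ 2 * ε := by
  have hz1a := zeta_nonneg hε hε' z1
  have hz1b := zeta_le_one hε hε' z1
  have hz2a := zeta_nonneg hε hε' z2
  have hz2b := zeta_le_one hε hε' z2
  set w := (1 / 2) * a * zetaNoise ε z1 * c * zetaNoise ε z2 with hw
  set g := (u1 - v) * z1 + (u2 - v) * z2 with hg
  have hw0 : 0 ≤ w := by rw [hw]; positivity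
  have hg2 : g ≤ 2 ∧ -2 ≤ g := by
    constructor <;> (rcases hv with h | h <;> subst h <;>
      rcases hz1 with h | h | h <;> subst h <;>
        rcases hz2 with h | h | h <;> subst h <;> rw [hg] <;> norm_num <;> linarith)
  by_cases h1 : z1 = 0
  · by_cases h2 : z2 = 0
    · subst h1; subst h2
      have : g = 0 := by rw [hg]; ring
      rw [this, mul_zero]; positivity
    · have hz2e : zetaNoise ε z2 = ε := by unfold zetaNoise; rw [if_neg h2]
      have hwε : w ≤ ε := by
        rw [hw, hz2e]
        nlinarith [mul_nonneg (mul_nonneg ha hc) hz1a,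
          mul_le_one₀ (mul_le_one₀ ha1 hc hc1) hz1a hz1b]
      nlinarith [mul_nonneg hw0 (by linarith [hg2.1] : (0:ℝ) ≤ 2 - g)]
  · have hz1e : zetaNoise ε z1 = ε := by unfold zetaNoise; rw [if_neg h1]
    have hwε : w ≤ ε := by
      rw [hw, hz1e]
      nlinarith [mul_nonneg (mul_nonneg ha hc) hz2a,
        mul_le_one₀ (mul_le_one₀ ha1 hc hc1) hz2a hz2b]
    nlinarith [mul_nonneg hw0 (by linarith [hg2.1] : (0:ℝ) ≤ 2 - g)]
section
variable {ε : ℝ} {a1 : ℝ → ℝ → ℝ} {a2 : ℝ → ℝ → ℝ → ℝ → ℝ} {S1 : ℝ → ℝ}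
  {S2 : ℝ → ℝ → ℝ}

lemma Rrem_le (hε : 0 < ε) (hε' : ε ≤ 1/3) (h : ValidStrategy a1 a2)
    (hS1 : ∀ y1, 0 ≤ S1 y1 ∧ S1 y1 ≤ 1) (hS2 : ∀ y1 y2, 0 ≤ S2 y1 y2 ∧ S2 y1 y2 ≤ 1) :
    Rrem ε a1 a2 S1 S2 ≤ 144 * ε := by
  have hbd : Rrem ε a1 a2 S1 S2 ≤
      ∑ v ∈ ({0, 1} : Finset ℝ), ∑ x1 ∈ ({0, 1} : Finset ℝ),
        ∑ z1 ∈ ({-1, 0, 1} : Finset ℝ), ∑ x2 ∈ ({0, 1} : Finset ℝ),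
          ∑ z2 ∈ ({-1, 0, 1} : Finset ℝ), 2 * ε := by
    unfold Rrem
    apply Finset.sum_le_sum; intro v hv
    apply Finset.sum_le_sum; intro x1 hx1
    apply Finset.sum_le_sum; intro z1 hz1
    apply Finset.sum_le_sum; intro x2 hx2
    apply Finset.sum_le_sum; intro z2 hz2
    have hv' : v = 0 ∨ v = 1 := by
      simpa only [Finset.mem_insert, Finset.mem_singleton] using hv
    have hz1' : z1 = -1 ∨ z1 = 0 ∨ z1 = 1 := by
      simpa only [Finset.mem_insert, Finset.mem_singleton] using hz1
    have hz2' : z2 = -1 ∨ z2 = 0 ∨ z2 = 1 := by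
      simpa only [Finset.mem_insert, Finset.mem_singleton] using hz2
    exact leaf_bound hε hε' (a1_nonneg h hv hx1) (a1_le_one h hv hx1)
      (a2_nonneg h hv hx1 hz1 hx2) (a2_le_one h hv hx1 hz1 hx2)
      (hS1 (x1 + z1)).1 (hS1 (x1 + z1)).2 (hS2 (x1 + z1) (x2 + z2)).1
      (hS2 (x1 + z1) (x2 + z2)).2 hv' hz1' hz2'
  have hconst : (∑ v ∈ ({0, 1} : Finset ℝ), ∑ x1 ∈ ({0, 1} : Finset ℝ),
      ∑ z1 ∈ ({-1, 0, 1} : Finset ℝ), ∑ x2 ∈ ({0, 1} : Finset ℝ),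
        ∑ z2 ∈ ({-1, 0, 1} : Finset ℝ), 2 * ε) = 144 * ε := by
    norm_num [Finset.sum_insert, Finset.mem_insert, Finset.mem_singleton,
      Finset.sum_singleton]
    ring
  linarith [hbd, hconst.le, hconst.ge]

lemma payoff_le_of_eq (hε : 0 < ε) (hε' : ε ≤ 1/3) (h : ValidStrategy a1 a2)
    (hS1 : ∀ y1, 0 ≤ S1 y1 ∧ S1 y1 ≤ 1) (hS2 : ∀ y1 y2, 0 ≤ S2 y1 y2 ∧ S2 y1 y2 ≤ 1)
    (hpr1 : ∀ y1, 0 < p1 ε a1 y1 → S1 y1 * p1 ε a1 y1 = pv1 ε a1 y1)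
    (hpr2 : ∀ y1 y2, 0 < p2 ε a1 a2 y1 y2 →
      S2 y1 y2 * p2 ε a1 a2 y1 y2 = pv2 ε a1 a2 y1 y2) :
    payoff ε a1 a2 S1 S2 ≤ 144 * ε := by
  have hs : ∀ v ∈ ({0,1} : Finset ℝ), ∀ x1 ∈ ({0,1} : Finset ℝ),
      ∀ z1 ∈ ({-1,0,1} : Finset ℝ), a2 v x1 z1 1 = 1 - a2 v x1 z1 0 := by
    intro v hv x1 hx1 z1 hz1
    have hsum := (h.2 v hv x1 hx1 z1 hz1).2
    rw [Finset.sum_insert (by norm_num), Finset.sum_singleton] at hsum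
    linarith
  rw [pay_eq ε a1 a2 S1 S2 hs]
  have e1 : (∑ y1 ∈ ({-1, 0, 1, 2} : Finset ℝ),
      y1 * (pv1 ε a1 y1 - S1 y1 * p1 ε a1 y1)) = 0 := by
    apply Finset.sum_eq_zero; intro y1 _
    rw [priceEq1 hε hε' h S1 hpr1 y1, sub_self, mul_zero]
  have e2 : (∑ y1 ∈ ({-1, 0, 1, 2} : Finset ℝ), ∑ y2 ∈ ({-1, 0, 1, 2} : Finset ℝ),
      y2 * (pv2 ε a1 a2 y1 y2 - S2 y1 y2 * p2 ε a1 a2 y1 y2)) = 0 := by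
    apply Finset.sum_eq_zero; intro y1 _
    apply Finset.sum_eq_zero; intro y2 _
    rw [priceEq2 hε hε' h S2 hpr2 y1 y2, sub_self, mul_zero]
  rw [e1, e2]
  simpa using Rrem_le hε hε' h hS1 hS2

end
noncomputable def bb1 : ℝ → ℝ → ℝ := fun v x1 => if x1 = v then 1 else 0
noncomputable def bb2 : ℝ → ℝ → ℝ → ℝ → ℝ := fun _ _ _ x2 => if x2 = 0 then 1 else 0
noncomputable def ba1 : ℝ → ℝ → ℝ := fun _ x1 => if x1 = 0 then 1 else 0
noncomputable def ba2 : ℝ → ℝ → ℝ → ℝ → ℝ := fun v _ _ x2 => if x2 = v then 1 else 0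

lemma bb_valid : ValidStrategy bb1 bb2 := by
  constructor
  · intro v hv
    simp only [Finset.mem_insert, Finset.mem_singleton] at hv
    constructor
    · intro x1 _; unfold bb1; split <;> norm_num
    · rcases hv with h | h <;> subst h <;>
        norm_num [bb1, Finset.sum_insert, Finset.mem_singleton, Finset.sum_singleton]
  · intro v _ x1 _ z1 _
    constructor
    · intro x2 _; unfold bb2; split <;> norm_num
    · norm_num [bb2, Finset.sum_insert, Finset.mem_singleton, Finset.sum_singleton]

lemma ba_valid : ValidStrategy ba1 ba2 := by
  constructor
  · intro v _
    constructor
    · intro x1 _; unfold ba1; split <;> norm_num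
    · norm_num [ba1, Finset.sum_insert, Finset.mem_singleton, Finset.sum_singleton]
  · intro v hv x1 _ z1 _
    simp only [Finset.mem_insert, Finset.mem_singleton] at hv
    constructor
    · intro x2 _; unfold ba2; split <;> norm_num
    · rcases hv with h | h <;> subst h <;>
        norm_num [ba2, Finset.sum_insert, Finset.mem_singleton, Finset.sum_singleton]

section
variable {ε : ℝ} {S1 : ℝ → ℝ} {S2 : ℝ → ℝ → ℝ}

lemma devB_payoff (hε : 0 < ε) (hε' : ε ≤ 1/3)
    (hS1 : ∀ y1, 0 ≤ S1 y1 ∧ S1 y1 ≤ 1) (hS2 : ∀ y1 y2, 0 ≤ S2 y1 y2 ∧ S2 y1 y2 ≤ 1) :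
    (1/2) * (1 - 2*ε) * (1 - S1 1) ≤ payoff ε bb1 bb2 S1 S2 := by
  norm_num [payoff, bb1, bb2, zetaNoise, Finset.sum_insert, Finset.mem_insert,
    Finset.mem_singleton, Finset.sum_singleton]
  nlinarith [mul_nonneg hε.le (sub_nonneg.2 (hS1 0).2),
    mul_nonneg hε.le (sub_nonneg.2 (hS1 2).2),
    mul_nonneg hε.le (sub_nonneg.2 (hS1 1).2), (hS1 1).1, (hS1 1).2]

lemma devA_payoff (hε : 0 < ε) (hε' : ε ≤ 1/3)
    (hS1 : ∀ y1, 0 ≤ S1 y1 ∧ S1 y1 ≤ 1) (hS2 : ∀ y1 y2, 0 ≤ S2 y1 y2 ∧ S2 y1 y2 ≤ 1) :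
    (1/2) * (1 - 2*ε)^2 * (1 - S2 0 1) ≤ payoff ε ba1 ba2 S1 S2 := by
  norm_num [payoff, ba1, ba2, zetaNoise, Finset.sum_insert, Finset.mem_insert,
    Finset.mem_singleton, Finset.sum_singleton]
  nlinarith [mul_nonneg (mul_nonneg hε.le hε.le) (sub_nonneg.2 (hS2 (-1) 0).2),
    mul_nonneg (mul_nonneg hε.le hε.le) (sub_nonneg.2 (hS2 (-1) 2).2),
    mul_nonneg (mul_nonneg hε.le hε.le) (sub_nonneg.2 (hS2 1 0).2),
    mul_nonneg (mul_nonneg hε.le hε.le) (sub_nonneg.2 (hS2 1 2).2),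
    mul_nonneg (mul_nonneg hε.le (by linarith : (0:ℝ) ≤ 1 - 2*ε))
      (sub_nonneg.2 (hS2 (-1) 1).2),
    mul_nonneg (mul_nonneg hε.le (by linarith : (0:ℝ) ≤ 1 - 2*ε))
      (sub_nonneg.2 (hS2 1 1).2),
    mul_nonneg (mul_nonneg hε.le (by linarith : (0:ℝ) ≤ 1 - 2*ε))
      (sub_nonneg.2 (hS2 0 0).2),
    mul_nonneg (mul_nonneg hε.le (by linarith : (0:ℝ) ≤ 1 - 2*ε))
      (sub_nonneg.2 (hS2 0 2).2),
    mul_nonneg (mul_nonneg hε.le hε.le) (sub_nonneg.2 (hS2 0 1).2),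
    (hS2 0 1).1, (hS2 0 1).2]

end
section
variable {ε : ℝ} {a1 : ℝ → ℝ → ℝ} {a2 : ℝ → ℝ → ℝ → ℝ → ℝ} {S1 : ℝ → ℝ}
  {S2 : ℝ → ℝ → ℝ}

lemma caseA_S1 (hε : 0 < ε) (hε' : ε ≤ 1/3) (h : ValidStrategy a1 a2)
    (hpr1 : ∀ y1, 0 < p1 ε a1 y1 → S1 y1 * p1 ε a1 y1 = pv1 ε a1 y1)
    (hcase : a1 1 1 = 0 ∨ a1 0 1 = 1) : S1 1 ≤ 1/2 := by
  have s0 := (h.1 0 (by norm_num)).2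
  have s1 := (h.1 1 (by norm_num)).2
  rw [Finset.sum_insert (by norm_num), Finset.sum_singleton] at s0 s1
  have n00 := (h.1 0 (by norm_num)).1 0 (by norm_num)
  have n01 := (h.1 0 (by norm_num)).1 1 (by norm_num)
  have n10 := (h.1 1 (by norm_num)).1 0 (by norm_num)
  have n11 := (h.1 1 (by norm_num)).1 1 (by norm_num)
  have hpos : 0 < p1 ε a1 1 := by
    norm_num [p1, zetaNoise, Finset.sum_insert, Finset.mem_insert,
      Finset.mem_singleton, Finset.sum_singleton]
    nlinarith
  have hle : 2 * pv1 ε a1 1 ≤ p1 ε a1 1 := by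
    norm_num [p1, pv1, zetaNoise, Finset.sum_insert, Finset.mem_insert,
      Finset.mem_singleton, Finset.sum_singleton]
    rcases hcase with hc | hc <;> nlinarith
  have heq := hpr1 1 hpos
  nlinarith
  
lemma caseB_S2 (hε : 0 < ε) (hε' : ε ≤ 1/3) (h : ValidStrategy a1 a2)
    (hpr2 : ∀ y1 y2, 0 < p2 ε a1 a2 y1 y2 →
      S2 y1 y2 * p2 ε a1 a2 y1 y2 = pv2 ε a1 a2 y1 y2)
    (h00 : a1 0 0 = 1) (h01 : a1 0 1 = 0) (h10 : a1 1 0 = 0) (h11 : a1 1 1 = 1) :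
    S2 0 1 ≤ 1/2 := by
  have sB := (h.2 0 (by norm_num) 0 (by norm_num) 0 (by norm_num)).2
  have sA := (h.2 1 (by norm_num) 1 (by norm_num) (-1) (by norm_num)).2
  rw [Finset.sum_insert (by norm_num), Finset.sum_singleton] at sA sB
  have nB0 := (h.2 0 (by norm_num) 0 (by norm_num) 0 (by norm_num)).1 0 (by norm_num)
  have nB1 := (h.2 0 (by norm_num) 0 (by norm_num) 0 (by norm_num)).1 1 (by norm_num)
  have nA0 := (h.2 1 (by norm_num) 1 (by norm_num) (-1) (by norm_num)).1 0 (by norm_num)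
  have nA1 := (h.2 1 (by norm_num) 1 (by norm_num) (-1) (by norm_num)).1 1 (by norm_num)
  have hpos : 0 < p2 ε a1 a2 0 1 := by
    norm_num [p2, zetaNoise, Finset.sum_insert, Finset.mem_insert,
      Finset.mem_singleton, Finset.sum_singleton, h00, h01, h10, h11]
    nlinarith [mul_pos hε (show (0:ℝ) < 1 - 2*ε by linarith),
      mul_nonneg (mul_nonneg nA0 hε.le) hε.le,
      mul_nonneg (mul_nonneg nA1 hε.le) (show (0:ℝ) ≤ 1-2*ε by linarith),
      mul_nonneg (mul_nonneg nB0 hε.le) (show (0:ℝ) ≤ 1-2*ε by linarith),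
      mul_le_mul_of_nonneg_left (show ε ≤ 1-2*ε by linarith)
        (mul_nonneg nB1 (show (0:ℝ) ≤ 1-2*ε by linarith))]
  have hle : 2 * pv2 ε a1 a2 0 1 ≤ p2 ε a1 a2 0 1 := by
    norm_num [p2, pv2, zetaNoise, Finset.sum_insert, Finset.mem_insert,
      Finset.mem_singleton, Finset.sum_singleton, h00, h01, h10, h11]
    have hA : a2 1 1 (-1) 0 * (ε*(1-2*ε)) + a2 1 1 (-1) 1 * (ε*(1-2*ε))
        = ε*(1-2*ε) := by linear_combination (ε*(1-2*ε)) * sA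
    have hB : a2 0 0 0 0 * (ε*(1-2*ε)) + a2 0 0 0 1 * (ε*(1-2*ε))
        = ε*(1-2*ε) := by linear_combination (ε*(1-2*ε)) * sB
    nlinarith [hA, hB, mul_le_mul_of_nonneg_left (show ε ≤ 1-2*ε by linarith)
        (mul_nonneg nA0 hε.le),
      mul_le_mul_of_nonneg_left (show ε ≤ 1-2*ε by linarith)
        (mul_nonneg nB1 (show (0:ℝ) ≤ 1-2*ε by linarith)),
      mul_nonneg (mul_nonneg nA1 hε.le) (show (0:ℝ) ≤ 1-2*ε by linarith),
      mul_nonneg (mul_nonneg nB0 hε.le) (show (0:ℝ) ≤ 1-2*ε by linarith)]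
  have heq := hpr2 0 1 hpos
  nlinarith

end

/-- For sufficiently small noise intensity `ε > 0`, the two-period Kyle game
with binary fully-revealed true value admits no equilibrium in which the
insider plays a pure strategy. -/
theorem no_pure_equilibrium_two_period :
    ∃ ε0 > (0 : ℝ), ∀ ε : ℝ, 0 < ε → ε < ε0 →
      ¬ ∃ (a1 : ℝ → ℝ → ℝ) (a2 : ℝ → ℝ → ℝ → ℝ → ℝ)
          (S1 : ℝ → ℝ) (S2 : ℝ → ℝ → ℝ),
        IsTwoPeriodKyleEquilibrium ε a1 a2 S1 S2 ∧ PureStrategy a1 a2 := by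
  refine ⟨1/2000, by norm_num, ?_⟩
  intro ε hε hεlt
  rintro ⟨a1, a2, S1, S2, ⟨hval, hS1, hS2, hopt, hpr1, hpr2⟩, hpure⟩
  have hε' : ε ≤ 1/3 := by linarith
  have hpay : payoff ε a1 a2 S1 S2 ≤ 144 * ε :=
    payoff_le_of_eq hε hε' hval hS1 hS2 hpr1 hpr2
  -- purity of the period-1 strategy
  have h00 := (hpure 0 (by norm_num) 0 (by norm_num)).1
  have h01 := (hpure 0 (by norm_num) 1 (by norm_num)).1
  have h11 := (hpure 1 (by norm_num) 1 (by norm_num)).1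
  have s0 := (hval.1 0 (by norm_num)).2
  have s1 := (hval.1 1 (by norm_num)).2
  rw [Finset.sum_insert (by norm_num), Finset.sum_singleton] at s0 s1
  by_cases hB : a1 0 0 = 1 ∧ a1 1 1 = 1
  ·
    obtain ⟨hb00, hb11⟩ := hB
    have hb01 : a1 0 1 = 0 := by linarith
    have hb10 : a1 1 0 = 0 := by linarith
    have hS2le : S2 0 1 ≤ 1/2 := caseB_S2 hε hε' hval hpr2 hb00 hb01 hb10 hb11
    have hdev := devA_payoff hε hε' hS1 hS2
    have hopt' := hopt ba1 ba2 ba_valid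
    nlinarith [hdev, hopt', hpay, hS2le, (hS2 0 1).1]
  · -- pooling/other case: deviation: buy in period 1
    have hcase : a1 1 1 = 0 ∨ a1 0 1 = 1 := by
      rcases h11 with h | h
      · exact Or.inl h
      · right
        rcases h00 with h0 | h0
        · linarith
        · exact absurd ⟨h0, h⟩ hB
    have hS1le : S1 1 ≤ 1/2 := caseA_S1 hε hε' hval hpr1 hcase
    have hdev := devB_payoff hε hε' hS1 hS2
    have hopt' := hopt bb1 bb2 bb_valid
    nlinarith [hdev, hopt', hpay, hS1le, (hS1 1).1]
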